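/- Fix integers S ≥ 0, g ≥ 1 and m ≥ 1 with S ≤ m·g. For every b ∈ P_{S,g,m}, f(b) equals the number of tuples b' ∈ P_{S,g,m} that are strictly smaller than b in the lexicographic order: f(b) = |{b' ∈ P_{S,g,m} : b' <_lex b}|. -/

import Mathlib

/-- `P_{S,k,n}`: the set of non-increasing `n`-tuples of natural numbers with all
coordinates at most `k` and coordinate sum exactly `S`. -/
def PSkn (S k n : ℕ) : Set (Fin n → ℕ) :=
  {b | Antitone b ∧ (∀ i, b i ≤ k) ∧ (∑ i, b i) = S}

/-- `N_{S,k,n}`: the cardinality of `P_{S,k,n}`. -/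
noncomputable def NSkn (S k n : ℕ) : ℕ :=
  Nat.card (PSkn S k n)

/-- The index `f(b)` of a tuple `b ∈ P_{S,g,m}`: writing `r` for the number of nonzero
coordinates of `b` (the largest index with `b_r ≠ 0`, since `b` is non-increasing) and
`S_i = S − Σ_{j=1}^{i} b_j`, we set `f(b) = Σ_{i=0}^{r−1} N_{S_i, b_{i+1}−1, m−i}`
(for `S = 0` this is the empty sum, so `f` of the zero tuple is `0`). -/
noncomputable def fIdx (S : ℕ) {m : ℕ} (b : Fin m → ℕ) : ℕ :=
  ∑ i : Fin m,
    if (i : ℕ) < (Finset.univ.filter (fun j : Fin m => b j ≠ 0)).card then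
      NSkn (S - ∑ j ∈ Finset.univ.filter (fun j : Fin m => j < i), b j)
        (b i - 1) (m - (i : ℕ))
    else 0

private lemma PSkn_finite (S k n : ℕ) : (PSkn S k n).Finite := by
  apply Set.Finite.subset (Set.Finite.pi (fun _ : Fin n => Set.finite_Iic k))
  intro b hb
  simp only [Set.mem_pi, Set.mem_univ, Set.mem_Iic, forall_true_left]
  exact fun i => hb.2.1 i

/-- the tail of a tuple starting at index `i` -/
private def tailF {m : ℕ} (a : Fin m → ℕ) (i : Fin m) : Fin (m - (i : ℕ)) → ℕ :=
  fun t => a ⟨(i : ℕ) + (t : ℕ), by have h1 := t.isLt; have h2 := i.isLt; omega⟩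

/-- gluing a tail onto a prefix of `b` -/
private def glueF {m : ℕ} (b : Fin m → ℕ) (i : Fin m) (c : Fin (m - (i : ℕ)) → ℕ) :
    Fin m → ℕ :=
  fun j => if (j : ℕ) < (i : ℕ) then b j
    else c ⟨(j : ℕ) - (i : ℕ), by have h1 := j.isLt; have h2 := i.isLt; omega⟩

private lemma tailF_glueF {m : ℕ} (b : Fin m → ℕ) (i : Fin m) (c : Fin (m - (i : ℕ)) → ℕ) :
    tailF (glueF b i c) i = c := by
  funext t
  simp only [tailF, glueF]
  rw [if_neg (by omega)]
  congr 1
  apply Fin.ext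
  simp

private lemma glueF_tailF {m : ℕ} (b b' : Fin m → ℕ) (i : Fin m)
    (hpre : ∀ j : Fin m, j < i → b' j = b j) :
    glueF b i (tailF b' i) = b' := by
  funext j
  simp only [glueF, tailF]
  by_cases h : (j : ℕ) < (i : ℕ)
  · rw [if_pos h, hpre j (by exact Fin.lt_def.mpr h)]
  · rw [if_neg h]
    congr 1
    apply Fin.ext
    simp only []
    omega

private lemma sum_split {m : ℕ} (a : Fin m → ℕ) (i : Fin m) :
    ∑ j, a j = (∑ j ∈ Finset.univ.filter (fun j : Fin m => j < i), a j) + ∑ t, tailF a i t := by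
  rw [← Finset.sum_filter_add_sum_filter_not Finset.univ (fun j : Fin m => j < i) a]
  congr 1
  refine Finset.sum_nbij'
    (fun j : Fin m => (⟨(j : ℕ) - (i : ℕ), by have := j.isLt; have := i.isLt; omega⟩ :
      Fin (m - (i : ℕ))))
    (fun t : Fin (m - (i : ℕ)) => (⟨(i : ℕ) + (t : ℕ), by have := t.isLt; have := i.isLt; omega⟩ :
      Fin m)) ?_ ?_ ?_ ?_ ?_
  · intros; exact Finset.mem_univ _
  · intro t _
    simp only [Finset.mem_filter, Finset.mem_univ, true_and, Fin.lt_def, not_lt]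
    omega
  · intro j hj
    simp only [Finset.mem_filter, Finset.mem_univ, true_and, Fin.lt_def, not_lt] at hj
    apply Fin.ext
    simp only []
    omega
  · intro t _
    apply Fin.ext
    simp
  · intro j hj
    simp only [Finset.mem_filter, Finset.mem_univ, true_and, Fin.lt_def, not_lt] at hj
    simp only [tailF]
    congr 1
    apply Fin.ext
    simp only []
    omega

private lemma lt_nonzero_card_iff {m : ℕ} {b : Fin m → ℕ} (hmono : Antitone b) (i : Fin m) :
    (i : ℕ) < (Finset.univ.filter (fun j : Fin m => b j ≠ 0)).card ↔ b i ≠ 0 := by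
  constructor
  · intro h
    by_contra h0
    have h0 : b i = 0 := by simpa using h0
    have hsub : Finset.univ.filter (fun j : Fin m => b j ≠ 0) ⊆ Finset.Iio i := by
      intro j hj
      simp only [Finset.mem_filter] at hj
      rw [Finset.mem_Iio]
      by_contra hji
      push_neg at hji
      have : b j ≤ 0 := h0 ▸ hmono hji
      exact hj.2 (Nat.le_zero.mp this)
    have := Finset.card_le_card hsub
    rw [Fin.card_Iio] at this
    omega
  · intro h
    have hsub : Finset.Iic i ⊆ Finset.univ.filter (fun j : Fin m => b j ≠ 0) := by
      intro j hj
      rw [Finset.mem_Iic] at hj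
      simp only [Finset.mem_filter, Finset.mem_univ, true_and]
      intro h0
      have : b i ≤ 0 := h0 ▸ hmono hj
      exact h (Nat.le_zero.mp this)
    have := Finset.card_le_card hsub
    rw [Fin.card_Iic] at this
    omega

private lemma card_T (S g m : ℕ) (b : Fin m → ℕ) (hb : b ∈ PSkn S g m) (i : Fin m)
    (hbi : b i ≠ 0) :
    Nat.card {b' : Fin m → ℕ | b' ∈ PSkn S g m ∧ (∀ j : Fin m, j < i → b' j = b j) ∧ b' i < b i}
      = NSkn (S - ∑ j ∈ Finset.univ.filter (fun j : Fin m => j < i), b j) (b i - 1)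
        (m - (i : ℕ)) := by
  classical
  obtain ⟨hmono, hbd, hsum⟩ := hb
  have hP : (∑ j ∈ Finset.univ.filter (fun j : Fin m => j < i), b j) ≤ S := by
    rw [← hsum]
    exact Finset.sum_le_sum_of_subset (Finset.filter_subset _ _)
  rw [NSkn]
  apply Nat.card_congr
  refine
    { toFun := fun b' => ⟨tailF b'.1 i, ?_, ?_, ?_⟩
      invFun := fun c => ⟨glueF b i c.1, ⟨?_, ?_, ?_⟩, ?_, ?_⟩
      left_inv := ?_
      right_inv := ?_ }
  · -- tail antitone
    intro t t' htt'
    exact b'.2.1.1 (by simp only [Fin.mk_le_mk]; have := Fin.le_def.mp htt'; omega)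
  · -- tail bounded by b i - 1
    intro t
    have h1 : b'.1 ⟨(i : ℕ) + (t : ℕ), by have := t.isLt; have := i.isLt; omega⟩ ≤ b'.1 i :=
      b'.2.1.1 (by simp only [Fin.le_def]; omega)
    have h2 : b'.1 i < b i := b'.2.2.2
    simp only [tailF]
    omega
  · -- tail sum
    have hsplit := sum_split b'.1 i
    have hsum' : ∑ j, b'.1 j = S := b'.2.1.2.2
    have hpre : (∑ j ∈ Finset.univ.filter (fun j : Fin m => j < i), b'.1 j)
        = ∑ j ∈ Finset.univ.filter (fun j : Fin m => j < i), b j := by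
      apply Finset.sum_congr rfl
      intro j hj
      simp only [Finset.mem_filter] at hj
      exact b'.2.2.1 j hj.2
    rw [hsum', hpre] at hsplit
    omega
  · -- glue antitone
    intro j j' hjj'
    have hle : (j : ℕ) ≤ (j' : ℕ) := Fin.le_def.mp hjj'
    simp only [glueF]
    by_cases h1 : (j : ℕ) < (i : ℕ) <;> by_cases h2 : (j' : ℕ) < (i : ℕ)
    · rw [if_pos h1, if_pos h2]
      exact hmono hjj'
    · rw [if_pos h1, if_neg h2]
      have hc : c.1 ⟨(j' : ℕ) - (i : ℕ), by have := j'.isLt; have := i.isLt; omega⟩ ≤ b i - 1 :=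
        c.2.2.1 _
      have hbij : b i ≤ b j := hmono (Fin.le_def.mpr (by omega))
      have hbi' : b i ≠ 0 := hbi
      omega
    · omega
    · rw [if_neg h1, if_neg h2]
      exact c.2.1 (by simp only [Fin.mk_le_mk]; omega)
  · -- glue bounded by g
    intro j
    simp only [glueF]
    by_cases h : (j : ℕ) < (i : ℕ)
    · rw [if_pos h]; exact hbd j
    · rw [if_neg h]
      have hc : c.1 ⟨(j : ℕ) - (i : ℕ), by have := j.isLt; have := i.isLt; omega⟩ ≤ b i - 1 :=
        c.2.2.1 _
      have := hbd i
      omega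
  · -- glue sum
    have hsplit := sum_split (glueF b i c.1) i
    rw [tailF_glueF] at hsplit
    have hcs : ∑ t, c.1 t
        = S - ∑ j ∈ Finset.univ.filter (fun j : Fin m => j < i), b j := c.2.2.2
    have hpre : (∑ j ∈ Finset.univ.filter (fun j : Fin m => j < i), glueF b i c.1 j)
        = ∑ j ∈ Finset.univ.filter (fun j : Fin m => j < i), b j := by
      apply Finset.sum_congr rfl
      intro j hj
      simp only [Finset.mem_filter, Fin.lt_def] at hj
      simp only [glueF, if_pos hj.2]
    rw [hpre, hcs] at hsplit
    omega
  · -- glue prefix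
    intro j hj
    simp only [glueF, if_pos (Fin.lt_def.mp hj)]
  · -- glue i < b i
    simp only [glueF, if_neg (lt_irrefl (i : ℕ))]
    have hc : c.1 ⟨(i : ℕ) - (i : ℕ), by have := i.isLt; omega⟩ ≤ b i - 1 := c.2.2.1 _
    omega
  · -- left inverse
    intro b'
    exact Subtype.ext (glueF_tailF b b'.1 i b'.2.2.1)
  · -- right inverse
    intro c
    exact Subtype.ext (tailF_glueF b i c.1)

/-- `f(b)` counts the tuples of `P_{S,g,m}` that are strictly smaller than `b` in the
lexicographic order: `f(b) = |{b' ∈ P_{S,g,m} : b' <_lex b}|`. -/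
theorem fIdx_eq_card_lex_lt (S g m : ℕ) (hg : 1 ≤ g) (hm : 1 ≤ m) (hS : S ≤ m * g)
    (b : Fin m → ℕ) (hb : b ∈ PSkn S g m) :
    fIdx S b = Nat.card {b' : Fin m → ℕ |
      b' ∈ PSkn S g m ∧ ∃ i : Fin m, (∀ j : Fin m, j < i → b' j = b j) ∧ b' i < b i} := by
  classical
  have hmono : Antitone b := hb.1
  set T : Fin m → Set (Fin m → ℕ) := fun i =>
    {b' | b' ∈ PSkn S g m ∧ (∀ j : Fin m, j < i → b' j = b j) ∧ b' i < b i} with hT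
  have hTfin : ∀ i, (T i).Finite := fun i =>
    (PSkn_finite S g m).subset (fun x hx => hx.1)
  have hset : {b' : Fin m → ℕ |
      b' ∈ PSkn S g m ∧ ∃ i : Fin m, (∀ j : Fin m, j < i → b' j = b j) ∧ b' i < b i}
      = ↑(Finset.univ.biUnion (fun i => (hTfin i).toFinset)) := by
    ext x
    simp only [Set.mem_setOf_eq, Finset.coe_biUnion, Finset.mem_coe, Finset.mem_univ,
      Set.mem_iUnion, Set.Finite.mem_toFinset, Set.iUnion_true, hT, Set.mem_setOf_eq]
    constructor
    · rintro ⟨h, i, h1, h2⟩; exact ⟨i, h, h1, h2⟩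
    · rintro ⟨i, h, h1, h2⟩; exact ⟨h, i, h1, h2⟩
  rw [hset, Nat.card_coe_set_eq, Set.ncard_coe_finset]
  rw [Finset.card_biUnion]
  · rw [fIdx]
    apply Finset.sum_congr rfl
    intro i _
    have hcard : ((hTfin i).toFinset).card = Nat.card (T i) := by
      rw [Nat.card_coe_set_eq, Set.ncard_eq_toFinset_card (T i) (hTfin i)]
    by_cases hbi : b i ≠ 0
    · rw [if_pos ((lt_nonzero_card_iff hmono i).mpr hbi), hcard, card_T S g m b hb i hbi]
    · push_neg at hbi
      rw [if_neg (by rw [lt_nonzero_card_iff hmono i]; simpa using hbi)]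
      rw [hcard]
      have : T i = ∅ := by
        ext x
        simp only [hT, Set.mem_setOf_eq, Set.mem_empty_iff_false, iff_false, not_and]
        intro _ _ h2
        omega
      rw [this]
      simp
  · intro i _ j _ hij
    rw [Function.onFun, Finset.disjoint_left]
    intro x hxi hxj
    rw [Set.Finite.mem_toFinset] at hxi hxj
    rcases hij.lt_or_gt with h | h
    · exact absurd (hxj.2.1 i h ▸ hxi.2.2) (lt_irrefl _)
    · exact absurd (hxi.2.1 j h ▸ hxj.2.2) (lt_irrefl _)
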